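/- Let ζ ∈ ℂ ∖ (−∞,0], let f ∈ 𝒮(ℝ³; ℂ) be a Schwartz function, and let ξ⁰ ∈ ℝ. For η = (η⁰, η⃗) ∈ V₊ set I(η) := ∫_{ℝ³} f(x) · W_ζ((ξ⁰ − iη⁰, x₁ − iη₁, x₂ − iη₂, x₃ − iη₃)) dx. Then as η → 0 within V₊ (i.e., along the filter of neighborhoods of 0 in ℝ⁴ restricted to V₊), I(η) converges to (2π)⁻³ ∫_{ℝ³} (2 E_ζ(k))⁻¹ · e^{−i E_ζ(k) ξ⁰} · f̂(k) dk, where f̂(k) := ∫_{ℝ³} f(x) e^{i(k₁x₁ + k₂x₂ + k₃x₃)} dx. -/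

import Mathlib

open MeasureTheory Complex

/-- Principal branch of `√(‖k‖² + ζ)` for `k ∈ ℝ³`. -/
noncomputable def Esqrt (ζ : ℂ) (k : EuclideanSpace ℝ (Fin 3)) : ℂ :=
  ((‖k‖ ^ 2 : ℝ) + ζ) ^ ((1 : ℂ) / 2)

/-- The holomorphic Wightman function `W_ζ(z)` of a simple (possibly complex-mass) pole. -/
noncomputable def Wpole (ζ : ℂ) (z : Fin 4 → ℂ) : ℂ :=
  ((2 * Real.pi : ℝ) : ℂ)⁻¹ ^ 3 * ∫ k : EuclideanSpace ℝ (Fin 3),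
    (2 * Esqrt ζ k)⁻¹ *
      Complex.exp (-Complex.I * Esqrt ζ k * z 0 +
        Complex.I * ((k 0 : ℂ) * z 1 + (k 1 : ℂ) * z 2 + (k 2 : ℂ) * z 3))

/-- The open forward light cone `V₊ = {η ∈ ℝ⁴ : η⁰ > |η⃗|}`. -/
def ForwardCone : Set (Fin 4 → ℝ) :=
  {η | Real.sqrt ((η 1) ^ 2 + (η 2) ^ 2 + (η 3) ^ 2) < η 0}

/-! ### Auxiliary lemmas -/

/-- Slit-plane condition. -/
def Slit (w : ℂ) : Prop := 0 < w.re ∨ w.im ≠ 0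

lemma slit_of_forall {ζ : ℂ} (hζ : ∀ x : ℝ, x ≤ 0 → ζ ≠ (x : ℂ)) : Slit ζ := by
  by_contra h
  unfold Slit at h
  push_neg at h
  exact hζ ζ.re h.1 (by apply Complex.ext <;> simp [h.2])

lemma Slit.ne_zero' {w : ℂ} (h : Slit w) : w ≠ 0 := by
  rintro rfl
  rcases h with h | h <;> simp at h

lemma Slit.add_real {w : ℂ} (h : Slit w) (t : ℝ) (ht : 0 ≤ t) : Slit ((t : ℂ) + w) := by
  rcases h with h | h
  · left; simp only [Complex.add_re, Complex.ofReal_re]; linarith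
  · right; simpa

lemma Slit.abs_arg_lt {w : ℂ} (h : Slit w) : |w.arg| < Real.pi := by
  rcases lt_or_eq_of_le (Complex.arg_le_pi w) with h1 | h1
  · exact abs_lt.mpr ⟨Complex.neg_pi_lt_arg w, h1⟩
  · exfalso
    rw [Complex.arg_eq_pi_iff] at h1
    rcases h with h | h
    · linarith [h1.1]
    · exact h h1.2

lemma sqrt_re_pos {w : ℂ} (h : Slit w) : 0 < (w ^ ((1:ℂ)/2)).re := by
  have hw : w ≠ 0 := h.ne_zero'
  rw [Complex.cpow_def_of_ne_zero hw, Complex.exp_re]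
  apply mul_pos (Real.exp_pos _)
  have him : (Complex.log w * ((1:ℂ)/2)).im = w.arg / 2 := by
    simp [Complex.mul_im, Complex.log_im]; ring
  rw [him]
  apply Real.cos_pos_of_mem_Ioo
  have := abs_lt.mp h.abs_arg_lt
  constructor
  · linarith [this.1]
  · linarith [this.2]

lemma sqrt_sq' {w : ℂ} (hw : w ≠ 0) : (w ^ ((1:ℂ)/2)) ^ 2 = w := by
  have : ((1:ℂ)/2) = (((2:ℕ)) : ℂ)⁻¹ := by norm_num
  rw [this]
  exact Complex.cpow_nat_inv_pow w two_ne_zero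

lemma sqrt_re_sq {w : ℂ} (hw : w ≠ 0) :
    ((w ^ ((1:ℂ)/2)).re) ^ 2 = (‖w‖ + w.re) / 2 := by
  set e := w ^ ((1:ℂ)/2) with he
  have h2 : e ^ 2 = w := sqrt_sq' hw
  have h1 : e.re ^ 2 - e.im ^ 2 = w.re := by
    rw [← h2]; simp [pow_two, Complex.mul_re]
  have h3 : e.re ^ 2 + e.im ^ 2 = ‖w‖ := by
    rw [← h2]
    have : ‖e ^ 2‖ = (‖e‖) ^ 2 := by simp
    rw [this, Complex.sq_norm, Complex.normSq_apply]; ring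
  linarith

lemma sqrt_im_mul {w : ℂ} (hw : w ≠ 0) :
    2 * (w ^ ((1:ℂ)/2)).re * (w ^ ((1:ℂ)/2)).im = w.im := by
  have h2 : (w ^ ((1:ℂ)/2)) ^ 2 = w := sqrt_sq' hw
  have := congrArg Complex.im h2
  rw [pow_two, Complex.mul_im] at this
  linarith

lemma slitW {ζ : ℂ} (hsl : Slit ζ) (k : EuclideanSpace ℝ (Fin 3)) :
    Slit (((‖k‖ ^ 2 : ℝ) : ℂ) + ζ) := hsl.add_real _ (sq_nonneg _)

lemma E_re_pos {ζ : ℂ} (hsl : Slit ζ) (k : EuclideanSpace ℝ (Fin 3)) :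
    0 < (Esqrt ζ k).re := sqrt_re_pos (slitW hsl k)

lemma E_re_ge_c {ζ : ℂ} (hsl : Slit ζ) (k : EuclideanSpace ℝ (Fin 3)) :
    (ζ ^ ((1:ℂ)/2)).re ≤ (Esqrt ζ k).re := by
  have h1 := sqrt_re_sq (slitW hsl k).ne_zero'
  have h2 := sqrt_re_sq hsl.ne_zero'
  have habs : ‖ζ‖ ≤ ‖((‖k‖ ^ 2 : ℝ) : ℂ) + ζ‖ + ‖k‖ ^ 2 := by
    have := norm_sub_le (((‖k‖ ^ 2 : ℝ) : ℂ) + ζ) ((‖k‖ ^ 2 : ℝ) : ℂ)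
    simpa using this
  have hre : (((‖k‖ ^ 2 : ℝ) : ℂ) + ζ).re = ‖k‖ ^ 2 + ζ.re := by
    rw [Complex.add_re, Complex.ofReal_re]
  have hle : ((ζ ^ ((1:ℂ)/2)).re) ^ 2 ≤ ((Esqrt ζ k).re) ^ 2 := by
    rw [h2, Esqrt, h1, hre]; linarith
  have h3 := (sqrt_re_pos hsl).le
  have h4 := (E_re_pos hsl k).le
  nlinarith

lemma E_re_ge_norm {ζ : ℂ} (hsl : Slit ζ) (k : EuclideanSpace ℝ (Fin 3)) :
    ‖k‖ - Real.sqrt (‖ζ‖) ≤ (Esqrt ζ k).re := by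
  have h1 := sqrt_re_sq (slitW hsl k).ne_zero'
  have hre : (((‖k‖ ^ 2 : ℝ) : ℂ) + ζ).re = ‖k‖ ^ 2 + ζ.re := by
    rw [Complex.add_re, Complex.ofReal_re]
  have habs : (((‖k‖ ^ 2 : ℝ) : ℂ) + ζ).re ≤ ‖((‖k‖ ^ 2 : ℝ) : ℂ) + ζ‖ :=
    Complex.re_le_norm _
  have hζre : -‖ζ‖ ≤ ζ.re := neg_le_of_abs_le (Complex.abs_re_le_norm ζ)
  have hsq : ‖k‖ ^ 2 - ‖ζ‖ ≤ ((Esqrt ζ k).re) ^ 2 := by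
    rw [Esqrt, h1]; rw [hre] at habs; linarith
  set s := Real.sqrt (‖ζ‖) with hs
  have hs0 : 0 ≤ s := Real.sqrt_nonneg _
  have hssq : s ^ 2 = ‖ζ‖ := Real.sq_sqrt (norm_nonneg _)
  rcases le_or_gt ‖k‖ s with h | h
  · linarith [E_re_pos hsl k]
  · have h4 := (E_re_pos hsl k).le
    nlinarith

lemma E_ne_zero {ζ : ℂ} (hsl : Slit ζ) (k : EuclideanSpace ℝ (Fin 3)) : Esqrt ζ k ≠ 0 := by
  intro h
  have := E_re_pos hsl k
  rw [h] at this; simp at this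

lemma E_im_abs_le {ζ : ℂ} (hsl : Slit ζ) (k : EuclideanSpace ℝ (Fin 3)) :
    |(Esqrt ζ k).im| ≤ |ζ.im| / (2 * (ζ ^ ((1:ℂ)/2)).re) := by
  have hmul := sqrt_im_mul (slitW hsl k).ne_zero'
  have him : (((‖k‖ ^ 2 : ℝ) : ℂ) + ζ).im = ζ.im := by
    rw [Complex.add_im, Complex.ofReal_im, zero_add]
  have hc : 0 < (ζ ^ ((1:ℂ)/2)).re := sqrt_re_pos hsl
  have hre : (ζ ^ ((1:ℂ)/2)).re ≤ (Esqrt ζ k).re := E_re_ge_c hsl k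
  have hE : 0 < (Esqrt ζ k).re := E_re_pos hsl k
  rw [him] at hmul
  have hmul' : 2 * (Esqrt ζ k).re * (Esqrt ζ k).im = ζ.im := hmul
  have heq : |(Esqrt ζ k).im| = |ζ.im| / (2 * (Esqrt ζ k).re) := by
    rw [← hmul', abs_mul, abs_mul, abs_of_pos hE, abs_of_pos (by norm_num : (0:ℝ) < 2)]
    field_simp
  rw [heq]
  apply div_le_div_of_nonneg_left (abs_nonneg _) (by linarith) (by linarith)

lemma norm_inv_2E_le {ζ : ℂ} (hsl : Slit ζ) (k : EuclideanSpace ℝ (Fin 3)) :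
    ‖(2 * Esqrt ζ k)⁻¹‖ ≤ (2 * (ζ ^ ((1:ℂ)/2)).re)⁻¹ := by
  have hc : 0 < (ζ ^ ((1:ℂ)/2)).re := sqrt_re_pos hsl
  have hre : (ζ ^ ((1:ℂ)/2)).re ≤ (Esqrt ζ k).re := E_re_ge_c hsl k
  rw [norm_inv]
  apply inv_anti₀ (by linarith)
  calc 2 * (ζ ^ ((1:ℂ)/2)).re ≤ 2 * (Esqrt ζ k).re := by linarith
    _ ≤ 2 * ‖Esqrt ζ k‖ := by
        have := Complex.re_le_norm (Esqrt ζ k); linarith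
    _ = ‖2 * Esqrt ζ k‖ := by
        rw [norm_mul]; simp

lemma contE {ζ : ℂ} (hsl : Slit ζ) : Continuous (Esqrt ζ) := by
  rw [continuous_iff_continuousAt]
  intro k
  have h1 : ContinuousAt (fun w : ℂ => w ^ ((1:ℂ)/2)) (((‖k‖ ^ 2 : ℝ) : ℂ) + ζ) := by
    apply continuousAt_cpow_const
    rw [Complex.mem_slitPlane_iff]
    exact slitW hsl k
  have h2 : Continuous (fun k : EuclideanSpace ℝ (Fin 3) => ((‖k‖ ^ 2 : ℝ) : ℂ) + ζ) := by
    continuity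
  exact ContinuousAt.comp (x := k) h1 h2.continuousAt

lemma integrable_exp_neg_norm {ε : ℝ} (hε : 0 < ε) :
    Integrable (fun k : EuclideanSpace ℝ (Fin 3) => Real.exp (-ε * ‖k‖)) := by
  set m := min ε 1 with hm
  have hm0 : 0 < m := lt_min hε one_pos
  have hm1 : m ≤ 1 := min_le_right _ _
  have hbound : ∀ k : EuclideanSpace ℝ (Fin 3),
      ‖Real.exp (-ε * ‖k‖)‖ ≤ (4 / m) ^ 4 * (1 + ‖k‖) ^ (-(4:ℝ)) := by
    intro k
    have hk : 0 ≤ ‖k‖ := norm_nonneg _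
    rw [Real.norm_eq_abs, abs_of_pos (Real.exp_pos _)]
    have h1 : Real.exp (-ε * ‖k‖) ≤ Real.exp (-m * ‖k‖) := by
      apply Real.exp_le_exp.mpr
      have : m ≤ ε := min_le_left _ _
      nlinarith
    have h2 : (1 + m * ‖k‖ / 4) ^ 4 ≤ Real.exp (m * ‖k‖) := by
      have h3 : (1 + m * ‖k‖ / 4) ≤ Real.exp (m * ‖k‖ / 4) := by
        have := Real.add_one_le_exp (m * ‖k‖ / 4); linarith
      calc (1 + m * ‖k‖ / 4) ^ 4 ≤ (Real.exp (m * ‖k‖ / 4)) ^ 4 := by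
            apply pow_le_pow_left₀ (by positivity) h3
        _ = Real.exp (m * ‖k‖) := by
            rw [← Real.exp_nat_mul]; congr 1; ring
    have h4 : m / 4 * (1 + ‖k‖) ≤ 1 + m * ‖k‖ / 4 := by nlinarith
    have h5 : Real.exp (-m * ‖k‖) = (Real.exp (m * ‖k‖))⁻¹ := by
      rw [← Real.exp_neg]; ring_nf
    have h6 : (m / 4 * (1 + ‖k‖)) ^ 4 ≤ Real.exp (m * ‖k‖) := by
      calc (m / 4 * (1 + ‖k‖)) ^ 4 ≤ (1 + m * ‖k‖ / 4) ^ 4 := by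
            apply pow_le_pow_left₀ (by positivity) h4
        _ ≤ _ := h2
    have h7 : Real.exp (-m * ‖k‖) ≤ ((m / 4 * (1 + ‖k‖)) ^ 4)⁻¹ := by
      rw [h5]
      apply inv_anti₀ (by positivity) h6
    have hrpow : (1 + ‖k‖) ^ (-(4:ℝ)) = ((1 + ‖k‖) ^ (4:ℕ))⁻¹ := by
      rw [Real.rpow_neg (by positivity)]
      congr 1
      rw [← Real.rpow_natCast (1 + ‖k‖) 4]
      norm_num
    rw [hrpow]
    calc Real.exp (-ε * ‖k‖) ≤ _ := h1
      _ ≤ ((m / 4 * (1 + ‖k‖)) ^ 4)⁻¹ := h7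
      _ = (4 / m) ^ 4 * ((1 + ‖k‖) ^ (4:ℕ))⁻¹ := by
          rw [mul_pow, mul_inv, ← inv_pow, inv_div]
  have hint : Integrable
      (fun k : EuclideanSpace ℝ (Fin 3) => (4 / m) ^ 4 * (1 + ‖k‖) ^ (-(4:ℝ))) := by
    apply Integrable.const_mul
    apply integrable_one_add_norm (E := EuclideanSpace ℝ (Fin 3))
    simp
    norm_num
  apply hint.mono'
    ((Real.continuous_exp.comp (continuous_const.mul continuous_norm)).aestronglyMeasurable)
  filter_upwards with k using hbound k

lemma cauchy3 (a1 a2 a3 b1 b2 b3 : ℝ) :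
    a1*b1 + a2*b2 + a3*b3 ≤
      Real.sqrt (a1^2 + a2^2 + a3^2) * Real.sqrt (b1^2 + b2^2 + b3^2) := by
  set A := Real.sqrt (a1^2 + a2^2 + a3^2) with hA
  set B := Real.sqrt (b1^2 + b2^2 + b3^2) with hB
  have hA2 : A^2 = a1^2 + a2^2 + a3^2 := Real.sq_sqrt (by positivity)
  have hB2 : B^2 = b1^2 + b2^2 + b3^2 := Real.sq_sqrt (by positivity)
  have hA0 : 0 ≤ A := Real.sqrt_nonneg _
  have hB0 : 0 ≤ B := Real.sqrt_nonneg _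
  nlinarith [sq_nonneg (a1*b2 - a2*b1), sq_nonneg (a1*b3 - a3*b1), sq_nonneg (a2*b3 - a3*b2),
    mul_nonneg hA0 hB0, sq_nonneg (A*B - (a1*b1 + a2*b2 + a3*b3)),
    sq_nonneg (A*B + (a1*b1 + a2*b2 + a3*b3))]

lemma norm3 (k : EuclideanSpace ℝ (Fin 3)) :
    ‖k‖ = Real.sqrt ((k 0)^2 + (k 1)^2 + (k 2)^2) := by
  rw [EuclideanSpace.norm_eq]
  congr 1
  simp [Fin.sum_univ_three, Real.norm_eq_abs, sq_abs]

lemma dot_le (k : EuclideanSpace ℝ (Fin 3)) (b1 b2 b3 : ℝ) :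
    k 0 * b1 + k 1 * b2 + k 2 * b3 ≤ ‖k‖ * Real.sqrt (b1^2 + b2^2 + b3^2) := by
  rw [norm3]
  exact cauchy3 _ _ _ _ _ _

lemma Pre_bound {ζ : ℂ} (hsl : Slit ζ) (k : EuclideanSpace ℝ (Fin 3))
    {ξ0 η0 η1 η2 η3 : ℝ} (hcone : Real.sqrt (η1^2 + η2^2 + η3^2) < η0) :
    (Esqrt ζ k).im * ξ0 - (Esqrt ζ k).re * η0 + (k 0 * η1 + k 1 * η2 + k 2 * η3)
      ≤ |ζ.im| / (2 * (ζ ^ ((1:ℂ)/2)).re) * |ξ0| + Real.sqrt (‖ζ‖) * η0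
        + (η0 - Real.sqrt (η1^2 + η2^2 + η3^2)) * Real.sqrt (‖ζ‖)
        - (η0 - Real.sqrt (η1^2 + η2^2 + η3^2)) * ‖k‖ := by
  set r := Real.sqrt (η1^2 + η2^2 + η3^2) with hr
  set s := Real.sqrt (‖ζ‖) with hs
  have hr0 : 0 ≤ r := Real.sqrt_nonneg _
  have hs0 : 0 ≤ s := Real.sqrt_nonneg _
  have hk0 : 0 ≤ ‖k‖ := norm_nonneg _
  have hE1 : ‖k‖ - s ≤ (Esqrt ζ k).re := E_re_ge_norm hsl k
  have him : (Esqrt ζ k).im * ξ0 ≤ |ζ.im| / (2 * (ζ ^ ((1:ℂ)/2)).re) * |ξ0| := by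
    calc (Esqrt ζ k).im * ξ0 ≤ |(Esqrt ζ k).im * ξ0| := le_abs_self _
      _ = |(Esqrt ζ k).im| * |ξ0| := abs_mul _ _
      _ ≤ _ := mul_le_mul_of_nonneg_right (E_im_abs_le hsl k) (abs_nonneg _)
  have hdot : k 0 * η1 + k 1 * η2 + k 2 * η3 ≤ ‖k‖ * r := dot_le k η1 η2 η3
  nlinarith [mul_le_mul_of_nonneg_right hE1 hr0,
    mul_le_mul_of_nonneg_left hE1 (le_of_lt (by linarith : (0:ℝ) < η0 - r))]

open scoped FourierTransform in
noncomputable def fhat (f : SchwartzMap (EuclideanSpace ℝ (Fin 3)) ℂ)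
    (k : EuclideanSpace ℝ (Fin 3)) : ℂ :=
  ∫ x : EuclideanSpace ℝ (Fin 3),
    f x * Complex.exp (Complex.I * ((k 0 * x 0 + k 1 * x 1 + k 2 * x 2 : ℝ) : ℂ))

open scoped FourierTransform in
lemma fhat_eq (f : SchwartzMap (EuclideanSpace ℝ (Fin 3)) ℂ) (k : EuclideanSpace ℝ (Fin 3)) :
    fhat f k = 𝓕 ⇑f ((-(2 * Real.pi)⁻¹) • k) := by
  rw [Real.fourier_eq']
  unfold fhat
  congr 1
  funext v
  rw [smul_eq_mul, mul_comm]
  congr 1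
  have hinner : (inner ℝ v ((-(2 * Real.pi)⁻¹) • k) : ℝ) = (-(2 * Real.pi)⁻¹) * (inner ℝ v k : ℝ) :=
    real_inner_smul_right _ _ _
  have hvk : (inner ℝ v k : ℝ) = k 0 * v 0 + k 1 * v 1 + k 2 * v 2 := by
    simp [PiLp.inner_apply, RCLike.inner_apply, Fin.sum_univ_three]
  have hpi : (2 * Real.pi) ≠ 0 := by positivity
  have h : -2 * Real.pi * (inner ℝ v ((-(2 * Real.pi)⁻¹) • k) : ℝ)
      = k 0 * v 0 + k 1 * v 1 + k 2 * v 2 := by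
    rw [hinner, hvk]
    field_simp
  rw [h]
  ring

lemma integrable_fhat (f : SchwartzMap (EuclideanSpace ℝ (Fin 3)) ℂ) :
    Integrable (fhat f) := by
  have h : fhat f = fun k => (SchwartzMap.fourierTransformCLM ℂ f) ((-(2 * Real.pi)⁻¹) • k) := by
    funext k
    rw [fhat_eq, SchwartzMap.fourierTransformCLM_apply, SchwartzMap.fourier_coe]
  rw [h]
  exact (SchwartzMap.integrable _).comp_smul (by
    simp only [ne_eq, neg_eq_zero, inv_eq_zero]
    positivity)

lemma exp_decomp (E : ℂ) (ξ0 η0 η1 η2 η3 x0 x1 x2 k0 k1 k2 : ℝ) :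
    -Complex.I * E * ((ξ0:ℂ) - Complex.I * (η0:ℂ)) +
      Complex.I * ((k0:ℂ) * ((x0:ℂ) - Complex.I * (η1:ℂ)) +
        (k1:ℂ) * ((x1:ℂ) - Complex.I * (η2:ℂ)) +
        (k2:ℂ) * ((x2:ℂ) - Complex.I * (η3:ℂ))) =
    -Complex.I * E * (ξ0:ℂ) + (-E * (η0:ℂ)) + ((k0*η1 + k1*η2 + k2*η3 : ℝ):ℂ) +
      Complex.I * ((k0*x0 + k1*x1 + k2*x2 : ℝ):ℂ) := by
  push_cast
  linear_combination (E * (η0:ℂ) - ((k0:ℂ)*(η1:ℂ) + (k1:ℂ)*(η2:ℂ) + (k2:ℂ)*(η3:ℂ))) *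
    Complex.I_sq

lemma split_z0 (E : ℂ) (ξ0 η0 : ℝ) :
    -Complex.I * E * ((ξ0:ℂ) - Complex.I * (η0:ℂ)) =
      -Complex.I * E * (ξ0:ℂ) + (-E * (η0:ℂ)) := by
  linear_combination (E * (η0:ℂ)) * Complex.I_sq

lemma re_decomp (E : ℂ) (a b d t : ℝ) :
    (-Complex.I * E * (a:ℂ) + (-E * (b:ℂ)) + ((d:ℝ):ℂ) + Complex.I * ((t:ℝ):ℂ)).re
      = E.im * a - E.re * b + d := by
  simp [Complex.add_re, Complex.mul_re, Complex.mul_im, Complex.I_re, Complex.I_im,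
    Complex.ofReal_re, Complex.ofReal_im, Complex.neg_re, Complex.neg_im]
  ring

lemma re_exponent0 (E : ℂ) (a b : ℝ) :
    (-Complex.I * E * ((a:ℂ) - Complex.I * (b:ℂ))).re = E.im * a - E.re * b := by
  rw [split_z0]
  simp [Complex.add_re, Complex.mul_re, Complex.mul_im, Complex.I_re, Complex.I_im,
    Complex.ofReal_re, Complex.ofReal_im, Complex.neg_re, Complex.neg_im]
  ring


lemma norm_cexp (z : ℂ) : ‖Complex.exp z‖ = Real.exp z.re := by
  rw [Complex.norm_exp]

lemma cont_coord (i : Fin 3) :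
    Continuous fun k : EuclideanSpace ℝ (Fin 3) => k i :=
  (EuclideanSpace.proj (𝕜 := ℝ) i).continuous

lemma cont_coordC (i : Fin 3) :
    Continuous fun k : EuclideanSpace ℝ (Fin 3) => ((k i : ℝ) : ℂ) :=
  Complex.continuous_ofReal.comp (cont_coord i)

lemma norm_Phi_le {ζ : ℂ} (hsl : Slit ζ) (k x : EuclideanSpace ℝ (Fin 3))
    {ξ0 η0 η1 η2 η3 : ℝ} (hcone : Real.sqrt (η1^2 + η2^2 + η3^2) < η0) :
    ‖(2 * Esqrt ζ k)⁻¹ * Complex.exp (-Complex.I * Esqrt ζ k * ((ξ0:ℂ) - Complex.I * (η0:ℂ)) +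
        Complex.I * ((k 0 : ℂ) * ((x 0 : ℂ) - Complex.I * (η1:ℂ)) +
          (k 1 : ℂ) * ((x 1 : ℂ) - Complex.I * (η2:ℂ)) +
          (k 2 : ℂ) * ((x 2 : ℂ) - Complex.I * (η3:ℂ))))‖
      ≤ ((2 * (ζ ^ ((1:ℂ)/2)).re)⁻¹ *
          Real.exp (|ζ.im| / (2 * (ζ ^ ((1:ℂ)/2)).re) * |ξ0| + Real.sqrt (‖ζ‖) * η0
            + (η0 - Real.sqrt (η1^2 + η2^2 + η3^2)) * Real.sqrt (‖ζ‖)))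
        * Real.exp (-(η0 - Real.sqrt (η1^2 + η2^2 + η3^2)) * ‖k‖) := by
  rw [norm_mul, exp_decomp, norm_cexp, re_decomp]
  have hc : 0 < (ζ ^ ((1:ℂ)/2)).re := sqrt_re_pos hsl
  calc ‖(2 * Esqrt ζ k)⁻¹‖ *
        Real.exp ((Esqrt ζ k).im * ξ0 - (Esqrt ζ k).re * η0 + (k 0 * η1 + k 1 * η2 + k 2 * η3))
      ≤ (2 * (ζ ^ ((1:ℂ)/2)).re)⁻¹ *
        Real.exp (|ζ.im| / (2 * (ζ ^ ((1:ℂ)/2)).re) * |ξ0| + Real.sqrt (‖ζ‖) * η0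
          + (η0 - Real.sqrt (η1^2 + η2^2 + η3^2)) * Real.sqrt (‖ζ‖)
          - (η0 - Real.sqrt (η1^2 + η2^2 + η3^2)) * ‖k‖) := by
        apply mul_le_mul (norm_inv_2E_le hsl k)
          (Real.exp_le_exp.mpr (Pre_bound hsl k hcone)) (Real.exp_pos _).le
          (by positivity)
    _ = _ := by
        rw [show |ζ.im| / (2 * (ζ ^ ((1:ℂ)/2)).re) * |ξ0| + Real.sqrt (‖ζ‖) * η0
          + (η0 - Real.sqrt (η1^2 + η2^2 + η3^2)) * Real.sqrt (‖ζ‖)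
          - (η0 - Real.sqrt (η1^2 + η2^2 + η3^2)) * ‖k‖
          = (|ζ.im| / (2 * (ζ ^ ((1:ℂ)/2)).re) * |ξ0| + Real.sqrt (‖ζ‖) * η0
          + (η0 - Real.sqrt (η1^2 + η2^2 + η3^2)) * Real.sqrt (‖ζ‖))
          + (-(η0 - Real.sqrt (η1^2 + η2^2 + η3^2)) * ‖k‖) from by ring, Real.exp_add]
        ring

lemma norm_G_le {ζ : ℂ} (hsl : Slit ζ) (f : SchwartzMap (EuclideanSpace ℝ (Fin 3)) ℂ)
    (k : EuclideanSpace ℝ (Fin 3)) {ξ0 η0 η1 η2 η3 : ℝ}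
    (hcone : Real.sqrt (η1^2 + η2^2 + η3^2) < η0) (hη01 : η0 < 1) :
    ‖(2 * Esqrt ζ k)⁻¹ * Complex.exp (-Complex.I * Esqrt ζ k * ((ξ0:ℂ) - Complex.I * (η0:ℂ)))
        * Complex.exp (((k 0 * η1 + k 1 * η2 + k 2 * η3 : ℝ) : ℂ)) * fhat f k‖
      ≤ (2 * (ζ ^ ((1:ℂ)/2)).re)⁻¹ *
          Real.exp (|ζ.im| / (2 * (ζ ^ ((1:ℂ)/2)).re) * |ξ0| + 2 * Real.sqrt (‖ζ‖))
          * ‖fhat f k‖ := by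
  have hc : 0 < (ζ ^ ((1:ℂ)/2)).re := sqrt_re_pos hsl
  set r := Real.sqrt (η1^2 + η2^2 + η3^2) with hr
  have hr0 : 0 ≤ r := Real.sqrt_nonneg _
  have hs0 : 0 ≤ Real.sqrt (‖ζ‖) := Real.sqrt_nonneg _
  have hk0 : 0 ≤ ‖k‖ := norm_nonneg _
  have hnorm : ‖(2 * Esqrt ζ k)⁻¹ *
        Complex.exp (-Complex.I * Esqrt ζ k * ((ξ0:ℂ) - Complex.I * (η0:ℂ)))
        * Complex.exp (((k 0 * η1 + k 1 * η2 + k 2 * η3 : ℝ) : ℂ)) * fhat f k‖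
      = ‖(2 * Esqrt ζ k)⁻¹‖ *
        (Real.exp ((Esqrt ζ k).im * ξ0 - (Esqrt ζ k).re * η0) *
          Real.exp (k 0 * η1 + k 1 * η2 + k 2 * η3))
        * ‖fhat f k‖ := by
    rw [norm_mul, norm_mul, norm_mul, norm_cexp, norm_cexp, re_exponent0, Complex.ofReal_re,
      mul_assoc ‖(2 * Esqrt ζ k)⁻¹‖]
  rw [hnorm, ← Real.exp_add]
  have hsum : (Esqrt ζ k).im * ξ0 - (Esqrt ζ k).re * η0 + (k 0 * η1 + k 1 * η2 + k 2 * η3)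
      ≤ |ζ.im| / (2 * (ζ ^ ((1:ℂ)/2)).re) * |ξ0| + 2 * Real.sqrt (‖ζ‖) := by
    have hb := Pre_bound (ξ0 := ξ0) hsl k hcone
    have h3 : 0 ≤ (η0 - r) * ‖k‖ := mul_nonneg (by linarith) hk0
    have h4 : Real.sqrt (‖ζ‖) * η0 ≤ Real.sqrt (‖ζ‖) := by nlinarith
    have h5 : (η0 - r) * Real.sqrt (‖ζ‖) ≤ Real.sqrt (‖ζ‖) := by nlinarith
    linarith
  apply mul_le_mul_of_nonneg_right _ (norm_nonneg _)
  exact mul_le_mul (norm_inv_2E_le hsl k) (Real.exp_le_exp.mpr hsum) (Real.exp_pos _).le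
    (by positivity)

/-- Theorem 4 of the paper: for `ζ ∈ ℂ ∖ (−∞,0]`, a Schwartz function `f` on
`ℝ³` and a real time `ξ⁰`, the spatially smeared holomorphic Wightman function
`I(η) = ∫ f(x) W_ζ(ξ⁰−iη⁰, x⃗−iη⃗) dx` converges, as `η → 0` within the forward cone `V₊`,
to `(2π)⁻³ ∫ (2E_ζ(k))⁻¹ e^{−iE_ζ(k)ξ⁰} f̂(k) dk`. -/
theorem wightman_boundary_value (ζ : ℂ) (hζ : ∀ x : ℝ, x ≤ 0 → ζ ≠ (x : ℂ))
    (f : SchwartzMap (EuclideanSpace ℝ (Fin 3)) ℂ) (ξ0 : ℝ) :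
    Filter.Tendsto
      (fun η : Fin 4 → ℝ => ∫ x : EuclideanSpace ℝ (Fin 3),
        f x * Wpole ζ ![(ξ0 : ℂ) - Complex.I * (η 0 : ℂ), (x 0 : ℂ) - Complex.I * (η 1 : ℂ),
          (x 1 : ℂ) - Complex.I * (η 2 : ℂ), (x 2 : ℂ) - Complex.I * (η 3 : ℂ)])
      (nhdsWithin 0 ForwardCone)
      (nhds (((2 * Real.pi : ℝ) : ℂ)⁻¹ ^ 3 * ∫ k : EuclideanSpace ℝ (Fin 3),
        (2 * Esqrt ζ k)⁻¹ * Complex.exp (-Complex.I * Esqrt ζ k * (ξ0 : ℂ)) *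
          ∫ x : EuclideanSpace ℝ (Fin 3),
            f x * Complex.exp (Complex.I * ((k 0 * x 0 + k 1 * x 1 + k 2 * x 2 : ℝ) : ℂ)))) := by
  have hsl : Slit ζ := slit_of_forall hζ
  have hc : 0 < (ζ ^ ((1:ℂ)/2)).re := sqrt_re_pos hsl
  -- the k-integrand after carrying out the x-integration
  set G : (Fin 4 → ℝ) → EuclideanSpace ℝ (Fin 3) → ℂ := fun η k =>
    (2 * Esqrt ζ k)⁻¹ *
      Complex.exp (-Complex.I * Esqrt ζ k * ((ξ0:ℂ) - Complex.I * ((η 0 : ℝ) : ℂ)))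
      * Complex.exp (((k 0 * η 1 + k 1 * η 2 + k 2 * η 3 : ℝ) : ℂ)) * fhat f k with hGdef
  -- Step 1: for η in the cone, the smeared function equals the k-integral of G η
  have hstep1 : ∀ η ∈ ForwardCone, (∫ x : EuclideanSpace ℝ (Fin 3),
      f x * Wpole ζ ![(ξ0 : ℂ) - Complex.I * (η 0 : ℂ), (x 0 : ℂ) - Complex.I * (η 1 : ℂ),
        (x 1 : ℂ) - Complex.I * (η 2 : ℂ), (x 2 : ℂ) - Complex.I * (η 3 : ℂ)])
      = ((2 * Real.pi : ℝ) : ℂ)⁻¹ ^ 3 * ∫ k : EuclideanSpace ℝ (Fin 3), G η k := by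
    intro η hη
    have hcone : Real.sqrt ((η 1)^2 + (η 2)^2 + (η 3)^2) < η 0 := hη
    have hr0 : 0 ≤ Real.sqrt ((η 1)^2 + (η 2)^2 + (η 3)^2) := Real.sqrt_nonneg _
    have hε : 0 < η 0 - Real.sqrt ((η 1)^2 + (η 2)^2 + (η 3)^2) := by linarith
    set Φ : EuclideanSpace ℝ (Fin 3) → EuclideanSpace ℝ (Fin 3) → ℂ := fun k x =>
      (2 * Esqrt ζ k)⁻¹ *
        Complex.exp (-Complex.I * Esqrt ζ k * ((ξ0:ℂ) - Complex.I * ((η 0 : ℝ):ℂ)) +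
          Complex.I * ((k 0 : ℂ) * (((x 0 : ℝ):ℂ) - Complex.I * ((η 1 : ℝ):ℂ)) +
            (k 1 : ℂ) * (((x 1 : ℝ):ℂ) - Complex.I * ((η 2 : ℝ):ℂ)) +
            (k 2 : ℂ) * (((x 2 : ℝ):ℂ) - Complex.I * ((η 3 : ℝ):ℂ)))) with hΦdef
    -- joint continuity
    have hcontF : Continuous (fun p : EuclideanSpace ℝ (Fin 3) × EuclideanSpace ℝ (Fin 3) =>
        f p.1 * Φ p.2 p.1) := by
      apply Continuous.mul (f.continuous.comp continuous_fst)
      apply Continuous.mul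
      · exact Continuous.inv₀ (continuous_const.mul ((contE hsl).comp continuous_snd))
          (fun p => mul_ne_zero two_ne_zero (E_ne_zero hsl p.2))
      · apply Complex.continuous_exp.comp
        apply Continuous.add
        · exact (continuous_const.mul ((contE hsl).comp continuous_snd)).mul continuous_const
        · apply continuous_const.mul
          apply Continuous.add
          apply Continuous.add
          · exact ((cont_coordC 0).comp continuous_snd).mul
              (((cont_coordC 0).comp continuous_fst).sub continuous_const)
          · exact ((cont_coordC 1).comp continuous_snd).mul
              (((cont_coordC 1).comp continuous_fst).sub continuous_const)
          · exact ((cont_coordC 2).comp continuous_snd).mul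
              (((cont_coordC 2).comp continuous_fst).sub continuous_const)
    -- joint integrability
    have hIntF : Integrable (Function.uncurry (fun x k => f x * Φ k x))
        ((volume : Measure (EuclideanSpace ℝ (Fin 3))).prod volume) := by
      have hb : Integrable (fun p : EuclideanSpace ℝ (Fin 3) × EuclideanSpace ℝ (Fin 3) =>
          ‖f p.1‖ * (((2 * (ζ ^ ((1:ℂ)/2)).re)⁻¹ *
            Real.exp (|ζ.im| / (2 * (ζ ^ ((1:ℂ)/2)).re) * |ξ0|
              + Real.sqrt (‖ζ‖) * η 0
              + (η 0 - Real.sqrt ((η 1)^2 + (η 2)^2 + (η 3)^2)) * Real.sqrt (‖ζ‖)))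
            * Real.exp (-(η 0 - Real.sqrt ((η 1)^2 + (η 2)^2 + (η 3)^2)) * ‖p.2‖)))
          ((volume : Measure (EuclideanSpace ℝ (Fin 3))).prod volume) :=
        (f.integrable.norm).mul_prod ((integrable_exp_neg_norm hε).const_mul _)
      apply hb.mono' hcontF.aestronglyMeasurable
      filter_upwards with p
      show ‖f p.1 * Φ p.2 p.1‖ ≤ _
      rw [norm_mul]
      exact mul_le_mul_of_nonneg_left (norm_Phi_le hsl p.2 p.1 hcone) (norm_nonneg _)
    -- pointwise identity for the x-integrand
    have hW : ∀ x : EuclideanSpace ℝ (Fin 3),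
        f x * Wpole ζ ![(ξ0 : ℂ) - Complex.I * (η 0 : ℂ), (x 0 : ℂ) - Complex.I * (η 1 : ℂ),
          (x 1 : ℂ) - Complex.I * (η 2 : ℂ), (x 2 : ℂ) - Complex.I * (η 3 : ℂ)]
        = ((2 * Real.pi : ℝ) : ℂ)⁻¹ ^ 3 * ∫ k : EuclideanSpace ℝ (Fin 3), f x * Φ k x := by
      intro x
      rw [Wpole]
      simp only [Matrix.cons_val_zero, Matrix.cons_val_one, Matrix.head_cons,
        Matrix.cons_val_two, Matrix.tail_cons, Matrix.cons_val_three]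
      rw [mul_left_comm]
      congr 1
      rw [← MeasureTheory.integral_const_mul]
    calc (∫ x : EuclideanSpace ℝ (Fin 3),
        f x * Wpole ζ ![(ξ0 : ℂ) - Complex.I * (η 0 : ℂ), (x 0 : ℂ) - Complex.I * (η 1 : ℂ),
          (x 1 : ℂ) - Complex.I * (η 2 : ℂ), (x 2 : ℂ) - Complex.I * (η 3 : ℂ)])
        = ∫ x : EuclideanSpace ℝ (Fin 3), ((2 * Real.pi : ℝ) : ℂ)⁻¹ ^ 3 *
            ∫ k : EuclideanSpace ℝ (Fin 3), f x * Φ k x :=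
          integral_congr_ae (Filter.Eventually.of_forall hW)
      _ = ((2 * Real.pi : ℝ) : ℂ)⁻¹ ^ 3 * ∫ x : EuclideanSpace ℝ (Fin 3),
            ∫ k : EuclideanSpace ℝ (Fin 3), f x * Φ k x :=
          MeasureTheory.integral_const_mul _ _
      _ = ((2 * Real.pi : ℝ) : ℂ)⁻¹ ^ 3 * ∫ k : EuclideanSpace ℝ (Fin 3),
            ∫ x : EuclideanSpace ℝ (Fin 3), f x * Φ k x := by
          rw [MeasureTheory.integral_integral_swap hIntF]
      _ = ((2 * Real.pi : ℝ) : ℂ)⁻¹ ^ 3 * ∫ k : EuclideanSpace ℝ (Fin 3), G η k := by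
          congr 1
          apply integral_congr_ae
          apply Filter.Eventually.of_forall
          intro k
          have hsplitx : ∀ x : EuclideanSpace ℝ (Fin 3), f x * Φ k x =
              ((2 * Esqrt ζ k)⁻¹ *
                Complex.exp (-Complex.I * Esqrt ζ k * ((ξ0:ℂ) - Complex.I * ((η 0 : ℝ):ℂ)))
                * Complex.exp (((k 0 * η 1 + k 1 * η 2 + k 2 * η 3 : ℝ) : ℂ))) *
              (f x * Complex.exp (Complex.I * ((k 0 * x 0 + k 1 * x 1 + k 2 * x 2 : ℝ) : ℂ))) := by
            intro x
            show f x * ((2 * Esqrt ζ k)⁻¹ * _) = _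
            rw [exp_decomp, split_z0]
            simp only [Complex.exp_add]
            ring
          show (∫ x : EuclideanSpace ℝ (Fin 3), f x * Φ k x) = G η k
          rw [integral_congr_ae (Filter.Eventually.of_forall hsplitx),
            MeasureTheory.integral_const_mul]
          rfl
  -- Step 2: dominated convergence for the k-integral
  have hmain : Filter.Tendsto (fun η => ∫ k : EuclideanSpace ℝ (Fin 3), G η k)
      (nhdsWithin 0 ForwardCone)
      (nhds (∫ k : EuclideanSpace ℝ (Fin 3),
        (2 * Esqrt ζ k)⁻¹ * Complex.exp (-Complex.I * Esqrt ζ k * (ξ0 : ℂ)) * fhat f k)) := by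
    apply MeasureTheory.tendsto_integral_filter_of_dominated_convergence
      (bound := fun k => (2 * (ζ ^ ((1:ℂ)/2)).re)⁻¹ *
        Real.exp (|ζ.im| / (2 * (ζ ^ ((1:ℂ)/2)).re) * |ξ0| + 2 * Real.sqrt (‖ζ‖))
        * ‖fhat f k‖)
    · -- measurability
      filter_upwards with η
      apply AEStronglyMeasurable.mul _ (integrable_fhat f).aestronglyMeasurable
      apply Continuous.aestronglyMeasurable
      apply Continuous.mul
      · apply Continuous.mul
        · exact Continuous.inv₀ (continuous_const.mul (contE hsl))
            (fun k => mul_ne_zero two_ne_zero (E_ne_zero hsl k))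
        · exact Complex.continuous_exp.comp
            ((continuous_const.mul (contE hsl)).mul continuous_const)
      · apply Complex.continuous_exp.comp
        apply Complex.continuous_ofReal.comp
        exact (((cont_coord 0).mul continuous_const).add
          ((cont_coord 1).mul continuous_const)).add ((cont_coord 2).mul continuous_const)
    · -- domination
      have h1 : ∀ᶠ η in nhdsWithin 0 ForwardCone, η ∈ ForwardCone := eventually_mem_nhdsWithin
      have h2 : ∀ᶠ η in nhdsWithin 0 ForwardCone, η 0 < 1 := by
        apply Filter.Eventually.filter_mono nhdsWithin_le_nhds
        exact IsOpen.mem_nhds (isOpen_lt (continuous_apply 0) continuous_const) (by simp)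
      filter_upwards [h1, h2] with η hη hη1
      filter_upwards with k
      exact norm_G_le hsl f k hη hη1
    · -- bound integrable
      exact ((integrable_fhat f).norm).const_mul _
    · -- pointwise convergence
      filter_upwards with k
      have hcontk : Continuous (fun η : Fin 4 → ℝ => G η k) := by
        apply Continuous.mul _ continuous_const
        apply Continuous.mul
        · apply Continuous.mul continuous_const
          apply Complex.continuous_exp.comp
          exact continuous_const.mul (continuous_const.sub (continuous_const.mul
            (Complex.continuous_ofReal.comp (continuous_apply 0))))
        · apply Complex.continuous_exp.comp
          apply Complex.continuous_ofReal.comp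
          exact ((continuous_const.mul (continuous_apply 1)).add
            (continuous_const.mul (continuous_apply 2))).add
            (continuous_const.mul (continuous_apply 3))
      have h0 : G 0 k = (2 * Esqrt ζ k)⁻¹ *
          Complex.exp (-Complex.I * Esqrt ζ k * (ξ0 : ℂ)) * fhat f k := by
        rw [hGdef]
        simp
      have := (hcontk.tendsto 0).mono_left (nhdsWithin_le_nhds (s := ForwardCone))
      rwa [h0] at this
  -- Conclusion
  have hfinal := hmain.const_mul (((2 * Real.pi : ℝ) : ℂ)⁻¹ ^ 3)
  apply Filter.Tendsto.congr' _ hfinal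
  · filter_upwards [eventually_mem_nhdsWithin] with η hη
    exact (hstep1 η hη).symm
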